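/- ∑_{n=0}^∞ (5/4)ₙ(7/4)ₙ((2)ₙ)⁴/(((1)ₙ)⁴(3/2)ₙ n!) · (1/4)ⁿ = 31/(2592√6) + 4921/(96√2). -/

import Mathlib

set_option maxHeartbeats 1000000

noncomputable def poch (a : ℝ) (n : ℕ) : ℝ := ∏ i ∈ Finset.range n, (a + i)

open Nat Finset

lemma poch_succ (a : ℝ) (n : ℕ) : poch a (n+1) = poch a n * (a + n) :=
  Finset.prod_range_succ _ _

lemma poch_zero (a : ℝ) : poch a 0 = 1 := rfl

lemma cb_le_four_pow (n : ℕ) : Nat.centralBinom n ≤ 4 ^ n := by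
  induction n with
  | zero => simp [Nat.centralBinom]
  | succ n ih =>
    have h := Nat.succ_mul_centralBinom_succ n
    have h2 : (n+1) * Nat.centralBinom (n+1) ≤ (n+1) * (4 * 4 ^ n) := by
      rw [h]
      calc 2*(2*n+1) * Nat.centralBinom n ≤ ((n+1)*4) * Nat.centralBinom n :=
            Nat.mul_le_mul_right _ (by omega)
        _ = (n+1) * (4 * Nat.centralBinom n) := by ring
        _ ≤ (n+1) * (4 * 4^n) := Nat.mul_le_mul_left _ (Nat.mul_le_mul_left _ ih)
    rw [pow_succ] at *
    exact Nat.le_of_mul_le_mul_left (by linarith [h2]) (Nat.succ_pos n)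

lemma catalan_le_four_pow (n : ℕ) : catalan n ≤ 4 ^ n := by
  have h := catalan_eq_centralBinom_div n
  exact le_trans (h ▸ Nat.div_le_self _ _) (cb_le_four_pow n)

lemma catalan_real (p : ℕ) : ((p:ℝ)+1) * catalan p = Nat.centralBinom p := by
  have h : (p+1) * catalan p = Nat.centralBinom p := by
    rw [catalan_eq_centralBinom_div, Nat.mul_div_cancel' (Nat.succ_dvd_centralBinom p)]
  exact_mod_cast congrArg (Nat.cast : ℕ → ℝ) h

lemma cb_succ_real (p : ℕ) : (Nat.centralBinom (p+1) : ℝ) = 2*(2*p+1) * catalan p := by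
  have h := Nat.succ_mul_centralBinom_succ p
  have h' : ((p:ℝ)+1) * Nat.centralBinom (p+1) = 2*(2*p+1) * Nat.centralBinom p := by
    exact_mod_cast congrArg (Nat.cast : ℕ → ℝ) h
  have hp : ((p:ℝ)+1) ≠ 0 := by positivity
  field_simp at h' ⊢
  rw [← catalan_real p] at h'
  nlinarith [h']

-- poch closed forms
lemma poch_one (n : ℕ) : poch 1 n = n.factorial := by
  induction n with
  | zero => simp [poch_zero]
  | succ n ih => rw [poch_succ, ih, Nat.factorial_succ]; push_cast; ring

lemma poch_two (n : ℕ) : poch 2 n = (n+1).factorial := by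
  induction n with
  | zero => simp [poch_zero]
  | succ n ih =>
    have h : ((n+1+1).factorial : ℝ) = ((n:ℝ)+2) * (n+1).factorial := by
      rw [Nat.factorial_succ]; push_cast; ring
    rw [poch_succ, ih, h]; push_cast; ring

lemma poch_threehalf (n : ℕ) : (4:ℝ)^n * n.factorial * poch (3/2) n = (2*n+1).factorial := by
  induction n with
  | zero => simp [poch_zero]
  | succ n ih =>
    rw [poch_succ]
    have h1 : (2*(n+1)+1).factorial = (2*n+3) * ((2*n+2) * (2*n+1).factorial) := by
      rw [show 2*(n+1)+1 = (2*n+2)+1 by ring, Nat.factorial_succ, show 2*n+2 = (2*n+1)+1 by ring,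
        Nat.factorial_succ]
    have h1' : ((2*(n+1)+1).factorial : ℝ) = (2*(n:ℝ)+3) * ((2*n+2) * (2*n+1).factorial) := by
      rw [h1]; push_cast; ring
    rw [h1', ← ih]
    push_cast [Nat.factorial_succ]; ring

lemma poch_quarters (n : ℕ) :
    3 * (2:ℝ)^(6*n+1) * (2*n+1).factorial * (poch (5/4) n * poch (7/4) n)
      = (4*n+3).factorial := by
  induction n with
  | zero => simp [poch_zero]; norm_num [Nat.factorial]
  | succ n ih =>
    have h1 : ((4*(n+1)+3).factorial : ℝ)
        = (4*n+7) * ((4*n+6) * ((4*n+5) * ((4*n+4) * (4*n+3).factorial))) := by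
      rw [show 4*(n+1)+3 = (4*n+6)+1 by ring, Nat.factorial_succ,
        show 4*n+6 = (4*n+5)+1 by ring, Nat.factorial_succ,
        show 4*n+5 = (4*n+4)+1 by ring, Nat.factorial_succ,
        show 4*n+4 = (4*n+3)+1 by ring, Nat.factorial_succ]
      push_cast; ring
    have h2 : ((2*(n+1)+1).factorial : ℝ) = (2*n+3) * ((2*n+2) * (2*n+1).factorial) := by
      rw [show 2*(n+1)+1 = (2*n+2)+1 by ring, Nat.factorial_succ,
        show 2*n+2 = (2*n+1)+1 by ring, Nat.factorial_succ]
      push_cast; ring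
    rw [poch_succ, poch_succ, h1, h2, ← ih, show 6*(n+1)+1 = (6*n+1)+6 by ring, pow_add]
    push_cast; ring

lemma poch_pos {a : ℝ} (ha : 0 < a) (n : ℕ) : 0 < poch a n := by
  apply Finset.prod_pos
  intro i _
  positivity

lemma lemA (n : ℕ) :
    poch (5/4) n * poch (7/4) n * (poch 2 n)^4
        / ((poch 1 n)^4 * poch (3/2) n * (Nat.factorial n)) * (1/4 : ℝ) ^ n
      = ((2*n+2 : ℕ):ℝ)^5 * Nat.centralBinom (2*n+2) / (192 * 64^n) := by
  have hfac : ∀ m : ℕ, ((m.factorial : ℝ)) ≠ 0 := fun m => by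
    exact_mod_cast (Nat.factorial_pos m).ne'
  have h4 : (4:ℝ)^n ≠ 0 := by positivity
  have h2p : (2:ℝ)^(6*n+1) ≠ 0 := by positivity
  -- closed forms
  have h1 : poch 1 n = n.factorial := poch_one n
  have h2 : poch 2 n = (n+1).factorial := poch_two n
  have h3 : poch (3/2) n = (2*n+1).factorial / ((4:ℝ)^n * n.factorial) := by
    rw [eq_div_iff (by positivity), ← poch_threehalf n]; ring
  have h5 : poch (5/4) n * poch (7/4) n
      = (4*n+3).factorial / (3 * (2:ℝ)^(6*n+1) * (2*n+1).factorial) := by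
    rw [eq_div_iff (by positivity), ← poch_quarters n]; ring
  -- central binomial
  have hcb : (Nat.centralBinom (2*n+2) : ℝ)
      = (4*n+4).factorial / ((2*n+2).factorial * (2*n+2).factorial) := by
    rw [eq_div_iff (by positivity)]
    have := Nat.choose_mul_factorial_mul_factorial (Nat.le_mul_of_pos_left (2*n+2) two_pos)
    have h := Nat.centralBinom_eq_two_mul_choose (2*n+2)
    have key : Nat.centralBinom (2*n+2) * (2*n+2).factorial * (2*n+2).factorial
        = (4*n+4).factorial := by
      rw [h]
      have e1 : 2*(2*n+2) - (2*n+2) = 2*n+2 := by omega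
      have e2 : 2*(2*n+2) = 4*n+4 := by omega
      calc (2*(2*n+2)).choose (2*n+2) * (2*n+2).factorial * (2*n+2).factorial
          = (2*(2*n+2)).choose (2*n+2) * (2*n+2).factorial * (2*(2*n+2)-(2*n+2)).factorial := by
            rw [e1]
        _ = (2*(2*n+2)).factorial :=
            Nat.choose_mul_factorial_mul_factorial (by omega)
        _ = (4*n+4).factorial := by rw [e2]
    calc (Nat.centralBinom (2*n+2) : ℝ) * ((2*n+2).factorial * (2*n+2).factorial)
        = ((Nat.centralBinom (2*n+2) * (2*n+2).factorial * (2*n+2).factorial : ℕ) : ℝ) := by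
          push_cast; ring
      _ = (4*n+4).factorial := by rw [key]
  -- factorial recurrences as real equalities
  have f1 : ((n+1).factorial : ℝ) = ((n:ℝ)+1) * n.factorial := by
    rw [Nat.factorial_succ]; push_cast; ring
  have f2 : ((2*n+2).factorial : ℝ) = (2*(n:ℝ)+2) * (2*n+1).factorial := by
    rw [show 2*n+2 = (2*n+1)+1 by ring, Nat.factorial_succ]; push_cast; ring
  have f3 : ((4*n+4).factorial : ℝ) = (4*(n:ℝ)+4) * (4*n+3).factorial := by
    rw [show 4*n+4 = (4*n+3)+1 by ring, Nat.factorial_succ]; push_cast; ring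
  have h64 : (64:ℝ)^n = (2:ℝ)^(6*n) := by
    rw [pow_mul]; norm_num
  have h2s : (2:ℝ)^(6*n+1) = 2 * (2:ℝ)^(6*n) := by
    rw [pow_succ]; ring
  rw [h1, h2, h3, h5, hcb, f1, f2, f3, h64, h2s]
  have g1 : ((2*n+1).factorial : ℝ) ≠ 0 := hfac _
  have g2 : ((4*n+3).factorial : ℝ) ≠ 0 := hfac _
  have g3 : ((n.factorial : ℝ)) ≠ 0 := hfac _
  have g4 : (2:ℝ)^(6*n) ≠ 0 := by positivity
  push_cast
  field_simp
  ring
  rw [← mul_pow]; norm_num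

lemma summable_abs_cb (k : ℕ) {y : ℝ} (hy : |y| ≤ 1/8) :
    Summable (fun q : ℕ => |(q:ℝ)^k * Nat.centralBinom q * y^q|) := by
  apply Summable.of_nonneg_of_le (fun q => abs_nonneg _)
    (f := fun q : ℕ => (q:ℝ)^k * (1/2)^q)
  · intro q
    rw [abs_mul, abs_mul, abs_pow, abs_pow, Nat.abs_cast, Nat.abs_cast]
    have hcb : (Nat.centralBinom q : ℝ) ≤ 4^q := by
      exact_mod_cast Nat.cast_le.mpr (cb_le_four_pow q)
    have hyq : |y|^q ≤ (1/8:ℝ)^q := pow_le_pow_left₀ (abs_nonneg _) hy q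
    calc (q:ℝ)^k * (Nat.centralBinom q) * |y|^q ≤ (q:ℝ)^k * 4^q * (1/8)^q := by
          apply mul_le_mul (mul_le_mul_of_nonneg_left hcb (by positivity)) hyq
            (by positivity) (by positivity)
      _ = (q:ℝ)^k * (1/2)^q := by
          rw [mul_assoc, ← mul_pow]; norm_num
  · have := summable_pow_mul_geometric_of_norm_lt_one (R := ℝ) k
      (r := 1/2) (by rw [Real.norm_eq_abs]; rw [abs_of_pos]; norm_num; norm_num)
    exact this

lemma summable_cb (k : ℕ) {y : ℝ} (hy : |y| ≤ 1/8) :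
    Summable (fun q : ℕ => (q:ℝ)^k * Nat.centralBinom q * y^q) :=
  (summable_abs_cb k hy).of_abs

lemma summable_abs_catalan {y : ℝ} (hy : |y| ≤ 1/8) :
    Summable (fun q : ℕ => |(catalan q : ℝ) * y^q|) := by
  apply Summable.of_nonneg_of_le (fun q => abs_nonneg _) (f := fun q : ℕ => (1/2:ℝ)^q)
  · intro q
    rw [abs_mul, abs_pow, Nat.abs_cast]
    have hc : (catalan q : ℝ) ≤ 4^q := by
      exact_mod_cast Nat.cast_le.mpr (catalan_le_four_pow q)
    have hyq : |y|^q ≤ (1/8:ℝ)^q := pow_le_pow_left₀ (abs_nonneg _) hy q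
    calc (catalan q : ℝ) * |y|^q ≤ 4^q * (1/8)^q :=
          mul_le_mul hc hyq (by positivity) (by positivity)
      _ = (1/2:ℝ)^q := by rw [← mul_pow]; norm_num
  · exact summable_geometric_of_lt_one (by norm_num) (by norm_num)

lemma shift_hasSum {f : ℕ → ℝ} {a : ℝ} (hf : HasSum f a) (h0 : f 0 = 0) :
    HasSum (fun p => f (p+1)) a := by
  refine (hasSum_nat_add_iff 1).mpr ?_
  simpa [h0] using hf

lemma catalan_term_bound {y : ℝ} (hy : |y| ≤ 1/8) (q : ℕ) :
    |(catalan q : ℝ) * y^q| ≤ (1/2:ℝ)^q := by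
  rw [abs_mul, abs_pow, Nat.abs_cast]
  have hc : (catalan q : ℝ) ≤ 4^q := by
    exact_mod_cast Nat.cast_le.mpr (catalan_le_four_pow q)
  have hyq : |y|^q ≤ (1/8:ℝ)^q := pow_le_pow_left₀ (abs_nonneg _) hy q
  calc (catalan q : ℝ) * |y|^q ≤ 4^q * (1/8)^q :=
        mul_le_mul hc hyq (by positivity) (by positivity)
    _ = (1/2:ℝ)^q := by rw [← mul_pow]; norm_num

lemma U5_hasSum {y s : ℝ} (hy : |y| ≤ 1/8) (hy0 : y ≠ 0) (hs : s^2 = 1 - 4*y)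
    (hs0 : 0 < s) :
    HasSum (fun q : ℕ => (q:ℝ)^5 * Nat.centralBinom q * y^q)
      ((2*y + 148*y^2 + 1032*y^3 + 928*y^4 + 32*y^5)/s^11) := by
  have hs' : s ≠ 0 := ne_of_gt hs0
  -- Catalan generating function F
  have hFsum : Summable (fun q : ℕ => (catalan q : ℝ) * y^q) := (summable_abs_catalan hy).of_abs
  obtain ⟨F, hF⟩ := hFsum
  have hFsum' : Summable (fun q : ℕ => (catalan q : ℝ) * y^q) := hF.summable
  -- Cauchy product
  have hnorm : Summable (fun q : ℕ => ‖(catalan q : ℝ) * y^q‖) := by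
    simp only [Real.norm_eq_abs]
    exact summable_abs_catalan hy
  have hmul := tsum_mul_tsum_eq_tsum_sum_antidiagonal_of_summable_norm hnorm hnorm
  rw [hF.tsum_eq] at hmul
  have hinner : ∀ n : ℕ, (∑ kl ∈ Finset.HasAntidiagonal.antidiagonal n,
      ((catalan kl.1 : ℝ) * y^kl.1) * ((catalan kl.2 : ℝ) * y^kl.2))
      = (catalan (n+1) : ℝ) * y^n := by
    intro n
    have hterm : ∀ kl ∈ Finset.HasAntidiagonal.antidiagonal n,
        ((catalan kl.1 : ℝ) * y^kl.1) * ((catalan kl.2 : ℝ) * y^kl.2)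
          = ((catalan kl.1 * catalan kl.2 : ℕ) : ℝ) * y^n := by
      intro kl hkl
      have h := Finset.HasAntidiagonal.mem_antidiagonal.mp hkl
      rw [← h]
      push_cast
      rw [pow_add]
      ring
    rw [Finset.sum_congr rfl hterm, ← Finset.sum_mul, ← Nat.cast_sum, ← catalan_succ' n]
  rw [tsum_congr hinner] at hmul
  -- shifted catalan sum
  have hFs : HasSum (fun n : ℕ => (catalan (n+1) : ℝ) * y^(n+1)) (F - 1) := by
    refine (hasSum_nat_add_iff (f := fun n : ℕ => (catalan n : ℝ) * y^n) 1).mpr ?_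
    simpa using hF
  have hFs2 : HasSum (fun n : ℕ => y * ((catalan (n+1) : ℝ) * y^n)) (F - 1) := by
    have e : (fun n : ℕ => (catalan (n+1) : ℝ) * y^(n+1))
        = fun n : ℕ => y * ((catalan (n+1) : ℝ) * y^n) := by
      funext n; rw [pow_succ]; ring
    exact e ▸ hFs
  have hFs3 : HasSum (fun n : ℕ => (catalan (n+1) : ℝ) * y^n) (y⁻¹ * (F - 1)) := by
    have := hFs2.mul_left y⁻¹
    simpa [← mul_assoc, inv_mul_cancel₀ hy0] using this
  have hquad : y * F^2 = F - 1 := by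
    have ht := hFs3.tsum_eq
    rw [ht] at hmul
    have : F * F = y⁻¹ * (F - 1) := hmul
    field_simp at this
    linarith [this]
  -- bound on F
  have hFb : |F| ≤ 2 := by
    have h1 : ‖F‖ ≤ ∑' q : ℕ, ‖(catalan q : ℝ) * y^q‖ := by
      rw [← hF.tsum_eq]; exact norm_tsum_le_tsum_norm hnorm
    have h2 : ∑' q : ℕ, ‖(catalan q : ℝ) * y^q‖ ≤ ∑' q : ℕ, (1/2:ℝ)^q := by
      apply Summable.tsum_le_tsum _ hnorm (summable_geometric_of_lt_one (by norm_num) (by norm_num))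
      intro q
      rw [Real.norm_eq_abs]
      exact catalan_term_bound hy q
    have h3 : ∑' q : ℕ, (1/2:ℝ)^q = 2 := by
      rw [tsum_geometric_of_lt_one (by norm_num) (by norm_num)]; norm_num
    rw [Real.norm_eq_abs] at h1
    linarith [h1, h2, h3.le, h3.ge]
  -- select the root
  have hroot : 2*y*F < 1 := by
    have h1 : 2*y*F ≤ |2*y*F| := le_abs_self _
    rw [abs_mul, abs_mul, abs_two] at h1
    nlinarith [abs_nonneg y, abs_nonneg F, mul_le_mul hy hFb (abs_nonneg F) (by norm_num : (0:ℝ) ≤ 1/8)]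
  have hsq : (2*y*F - 1)^2 = s^2 := by
    rw [hs]; linear_combination (4*y) * hquad
  have hFval : 2*y*F = 1 - s := by
    have hfac : (2*y*F - 1 + s) * (2*y*F - 1 - s) = 0 := by linear_combination hsq
    rcases mul_eq_zero.mp hfac with h | h
    · linarith
    · nlinarith [h]
  -- central binomial generating function G
  have hGsum : Summable (fun q : ℕ => (Nat.centralBinom q : ℝ) * y^q) := by
    have := summable_cb 0 hy
    simpa using this
  obtain ⟨G, hG⟩ := hGsum
  have hGs : HasSum (fun p : ℕ => (Nat.centralBinom (p+1) : ℝ) * y^(p+1)) (G - 1) := by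
    refine (hasSum_nat_add_iff (f := fun n : ℕ => (Nat.centralBinom n : ℝ) * y^n) 1).mpr ?_
    simpa [Nat.centralBinom] using hG
  have eG : (fun p : ℕ => (Nat.centralBinom (p+1) : ℝ) * y^(p+1))
      = fun p : ℕ => 4*y*((Nat.centralBinom p : ℝ)*y^p) - 2*y*((catalan p : ℝ)*y^p) := by
    funext p
    rw [cb_succ_real p, ← catalan_real p, pow_succ]
    ring
  have hGcomb : HasSum
      (fun p : ℕ => 4*y*((Nat.centralBinom p : ℝ)*y^p) - 2*y*((catalan p : ℝ)*y^p))
      (4*y*G - 2*y*F) := (hG.mul_left (4*y)).sub (hF.mul_left (2*y))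
  have heqG : G - 1 = 4*y*G - 2*y*F := HasSum.unique (eG ▸ hGs) hGcomb
  have hV0 : G * s = 1 := by
    have h : G * s^2 = s := by
      rw [hs]; linear_combination heqG - hFval
    have := mul_right_cancel₀ hs' (by linear_combination h : (G * s) * s = 1 * s)
    exact this

  -- k = 1
  have hW1sum : Summable (fun q : ℕ => ((q:ℝ))^1 * Nat.centralBinom q * y^q) := summable_cb 1 hy
  obtain ⟨W1, hW1⟩ := hW1sum
  have hsh1 : HasSum (fun p : ℕ => (((p+1 : ℕ)):ℝ)^1 * Nat.centralBinom (p+1) * y^(p+1)) W1 :=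
    shift_hasSum hW1 (by norm_num)
  have e1 : (fun p : ℕ => (((p+1 : ℕ)):ℝ)^1 * Nat.centralBinom (p+1) * y^(p+1))
      = (fun p : ℕ => 2*y*(1 * ((Nat.centralBinom p : ℝ) * y^p) + 2 * (((p:ℝ))^1 * Nat.centralBinom p * y^p))) := by
    funext p
    rw [cb_succ_real p, ← catalan_real p]
    push_cast
    ring
  have hcomb1 : HasSum (fun p : ℕ => 2*y*(1 * ((Nat.centralBinom p : ℝ) * y^p) + 2 * (((p:ℝ))^1 * Nat.centralBinom p * y^p))) (2*y*(1 * G + 2 * W1)) :=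
    ((hG.mul_left 1).add (hW1.mul_left 2)).mul_left (2*y)
  have heq1 : W1 = 2*y*(1 * G + 2 * W1) := HasSum.unique (e1 ▸ hsh1) hcomb1
  have h1_1 : W1 * s^2 = 2*y*(1 * G) := by
    rw [hs]; linear_combination heq1
  have hV1 : W1 * s^3 = 2*y := by
    linear_combination s^1 * h1_1 + 2*y*1 * hV0
  -- k = 2
  have hW2sum : Summable (fun q : ℕ => ((q:ℝ))^2 * Nat.centralBinom q * y^q) := summable_cb 2 hy
  obtain ⟨W2, hW2⟩ := hW2sum
  have hsh2 : HasSum (fun p : ℕ => (((p+1 : ℕ)):ℝ)^2 * Nat.centralBinom (p+1) * y^(p+1)) W2 :=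
    shift_hasSum hW2 (by norm_num)
  have e2 : (fun p : ℕ => (((p+1 : ℕ)):ℝ)^2 * Nat.centralBinom (p+1) * y^(p+1))
      = (fun p : ℕ => 2*y*((1 * ((Nat.centralBinom p : ℝ) * y^p) + 3 * (((p:ℝ))^1 * Nat.centralBinom p * y^p)) + 2 * (((p:ℝ))^2 * Nat.centralBinom p * y^p))) := by
    funext p
    rw [cb_succ_real p, ← catalan_real p]
    push_cast
    ring
  have hcomb2 : HasSum (fun p : ℕ => 2*y*((1 * ((Nat.centralBinom p : ℝ) * y^p) + 3 * (((p:ℝ))^1 * Nat.centralBinom p * y^p)) + 2 * (((p:ℝ))^2 * Nat.centralBinom p * y^p))) (2*y*((1 * G + 3 * W1) + 2 * W2)) :=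
    (((hG.mul_left 1).add (hW1.mul_left 3)).add (hW2.mul_left 2)).mul_left (2*y)
  have heq2 : W2 = 2*y*((1 * G + 3 * W1) + 2 * W2) := HasSum.unique (e2 ▸ hsh2) hcomb2
  have h1_2 : W2 * s^2 = 2*y*(1 * G + 3 * W1) := by
    rw [hs]; linear_combination heq2
  have hV2 : W2 * s^5 = (2*y + 4*y^2) := by
    linear_combination s^3 * h1_2 + 2*y*1 * s^2 * hV0 + 2*y*3 * hV1 + (2*y) * hs
  -- k = 3
  have hW3sum : Summable (fun q : ℕ => ((q:ℝ))^3 * Nat.centralBinom q * y^q) := summable_cb 3 hy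
  obtain ⟨W3, hW3⟩ := hW3sum
  have hsh3 : HasSum (fun p : ℕ => (((p+1 : ℕ)):ℝ)^3 * Nat.centralBinom (p+1) * y^(p+1)) W3 :=
    shift_hasSum hW3 (by norm_num)
  have e3 : (fun p : ℕ => (((p+1 : ℕ)):ℝ)^3 * Nat.centralBinom (p+1) * y^(p+1))
      = (fun p : ℕ => 2*y*(((1 * ((Nat.centralBinom p : ℝ) * y^p) + 4 * (((p:ℝ))^1 * Nat.centralBinom p * y^p)) + 5 * (((p:ℝ))^2 * Nat.centralBinom p * y^p)) + 2 * (((p:ℝ))^3 * Nat.centralBinom p * y^p))) := by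
    funext p
    rw [cb_succ_real p, ← catalan_real p]
    push_cast
    ring
  have hcomb3 : HasSum (fun p : ℕ => 2*y*(((1 * ((Nat.centralBinom p : ℝ) * y^p) + 4 * (((p:ℝ))^1 * Nat.centralBinom p * y^p)) + 5 * (((p:ℝ))^2 * Nat.centralBinom p * y^p)) + 2 * (((p:ℝ))^3 * Nat.centralBinom p * y^p))) (2*y*(((1 * G + 4 * W1) + 5 * W2) + 2 * W3)) :=
    ((((hG.mul_left 1).add (hW1.mul_left 4)).add (hW2.mul_left 5)).add (hW3.mul_left 2)).mul_left (2*y)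
  have heq3 : W3 = 2*y*(((1 * G + 4 * W1) + 5 * W2) + 2 * W3) := HasSum.unique (e3 ▸ hsh3) hcomb3
  have h1_3 : W3 * s^2 = 2*y*(1 * G + 4 * W1 + 5 * W2) := by
    rw [hs]; linear_combination heq3
  have hV3 : W3 * s^7 = (2*y + 20*y^2 + 8*y^3) := by
    linear_combination s^5 * h1_3 + 2*y*1 * s^4 * hV0 + 2*y*4 * s^2 * hV1 + 2*y*5 * hV2 + (2*y + 2*y*s^2 + 8*y^2) * hs
  -- k = 4
  have hW4sum : Summable (fun q : ℕ => ((q:ℝ))^4 * Nat.centralBinom q * y^q) := summable_cb 4 hy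
  obtain ⟨W4, hW4⟩ := hW4sum
  have hsh4 : HasSum (fun p : ℕ => (((p+1 : ℕ)):ℝ)^4 * Nat.centralBinom (p+1) * y^(p+1)) W4 :=
    shift_hasSum hW4 (by norm_num)
  have e4 : (fun p : ℕ => (((p+1 : ℕ)):ℝ)^4 * Nat.centralBinom (p+1) * y^(p+1))
      = (fun p : ℕ => 2*y*((((1 * ((Nat.centralBinom p : ℝ) * y^p) + 5 * (((p:ℝ))^1 * Nat.centralBinom p * y^p)) + 9 * (((p:ℝ))^2 * Nat.centralBinom p * y^p)) + 7 * (((p:ℝ))^3 * Nat.centralBinom p * y^p)) + 2 * (((p:ℝ))^4 * Nat.centralBinom p * y^p))) := by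
    funext p
    rw [cb_succ_real p, ← catalan_real p]
    push_cast
    ring
  have hcomb4 : HasSum (fun p : ℕ => 2*y*((((1 * ((Nat.centralBinom p : ℝ) * y^p) + 5 * (((p:ℝ))^1 * Nat.centralBinom p * y^p)) + 9 * (((p:ℝ))^2 * Nat.centralBinom p * y^p)) + 7 * (((p:ℝ))^3 * Nat.centralBinom p * y^p)) + 2 * (((p:ℝ))^4 * Nat.centralBinom p * y^p))) (2*y*((((1 * G + 5 * W1) + 9 * W2) + 7 * W3) + 2 * W4)) :=
    (((((hG.mul_left 1).add (hW1.mul_left 5)).add (hW2.mul_left 9)).add (hW3.mul_left 7)).add (hW4.mul_left 2)).mul_left (2*y)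
  have heq4 : W4 = 2*y*((((1 * G + 5 * W1) + 9 * W2) + 7 * W3) + 2 * W4) := HasSum.unique (e4 ▸ hsh4) hcomb4
  have h1_4 : W4 * s^2 = 2*y*(1 * G + 5 * W1 + 9 * W2 + 7 * W3) := by
    rw [hs]; linear_combination heq4
  have hV4 : W4 * s^9 = (2*y + 60*y^2 + 144*y^3 + 16*y^4) := by
    linear_combination s^7 * h1_4 + 2*y*1 * s^6 * hV0 + 2*y*5 * s^4 * hV1 + 2*y*9 * s^2 * hV2 + 2*y*7 * hV3 + (2*y + 2*y*s^2 + 2*y*s^4 + 40*y^2 + 12*y^2*s^2 + 24*y^3) * hs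
  -- k = 5
  have hW5sum : Summable (fun q : ℕ => ((q:ℝ))^5 * Nat.centralBinom q * y^q) := summable_cb 5 hy
  obtain ⟨W5, hW5⟩ := hW5sum
  have hsh5 : HasSum (fun p : ℕ => (((p+1 : ℕ)):ℝ)^5 * Nat.centralBinom (p+1) * y^(p+1)) W5 :=
    shift_hasSum hW5 (by norm_num)
  have e5 : (fun p : ℕ => (((p+1 : ℕ)):ℝ)^5 * Nat.centralBinom (p+1) * y^(p+1))
      = (fun p : ℕ => 2*y*(((((1 * ((Nat.centralBinom p : ℝ) * y^p) + 6 * (((p:ℝ))^1 * Nat.centralBinom p * y^p)) + 14 * (((p:ℝ))^2 * Nat.centralBinom p * y^p)) + 16 * (((p:ℝ))^3 * Nat.centralBinom p * y^p)) + 9 * (((p:ℝ))^4 * Nat.centralBinom p * y^p)) + 2 * (((p:ℝ))^5 * Nat.centralBinom p * y^p))) := by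
    funext p
    rw [cb_succ_real p, ← catalan_real p]
    push_cast
    ring
  have hcomb5 : HasSum (fun p : ℕ => 2*y*(((((1 * ((Nat.centralBinom p : ℝ) * y^p) + 6 * (((p:ℝ))^1 * Nat.centralBinom p * y^p)) + 14 * (((p:ℝ))^2 * Nat.centralBinom p * y^p)) + 16 * (((p:ℝ))^3 * Nat.centralBinom p * y^p)) + 9 * (((p:ℝ))^4 * Nat.centralBinom p * y^p)) + 2 * (((p:ℝ))^5 * Nat.centralBinom p * y^p))) (2*y*(((((1 * G + 6 * W1) + 14 * W2) + 16 * W3) + 9 * W4) + 2 * W5)) :=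
    ((((((hG.mul_left 1).add (hW1.mul_left 6)).add (hW2.mul_left 14)).add (hW3.mul_left 16)).add (hW4.mul_left 9)).add (hW5.mul_left 2)).mul_left (2*y)
  have heq5 : W5 = 2*y*(((((1 * G + 6 * W1) + 14 * W2) + 16 * W3) + 9 * W4) + 2 * W5) := HasSum.unique (e5 ▸ hsh5) hcomb5
  have h1_5 : W5 * s^2 = 2*y*(1 * G + 6 * W1 + 14 * W2 + 16 * W3 + 9 * W4) := by
    rw [hs]; linear_combination heq5
  have hV5 : W5 * s^11 = (2*y + 148*y^2 + 1032*y^3 + 928*y^4 + 32*y^5) := by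
    linear_combination s^9 * h1_5 + 2*y*1 * s^8 * hV0 + 2*y*6 * s^6 * hV1 + 2*y*14 * s^4 * hV2 + 2*y*16 * s^2 * hV3 + 2*y*9 * hV4 + (2*y + 2*y*s^2 + 2*y*s^4 + 2*y*s^6 + 120*y^2 + 64*y^2*s^2 + 16*y^2*s^4 + 432*y^3 + 48*y^3*s^2 + 64*y^4) * hs
  -- conclusion
  have hW5val : W5 = (2*y + 148*y^2 + 1032*y^3 + 928*y^4 + 32*y^5)/s^11 := by
    rw [eq_div_iff (pow_ne_zero _ hs')]
    exact hV5
  exact hW5val ▸ hW5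

theorem sixF5_quarter_value :
    ∑' n : ℕ,
        poch (5/4) n * poch (7/4) n * (poch 2 n)^4
          / ((poch 1 n)^4 * poch (3/2) n * (Nat.factorial n)) * (1/4 : ℝ) ^ n =
      31 / (2592 * Real.sqrt 6) + 4921 / (96 * Real.sqrt 2) := by
  have h2 : (Real.sqrt 2)^2 = 2 := Real.sq_sqrt (by norm_num)
  have h6 : (Real.sqrt 6)^2 = 6 := Real.sq_sqrt (by norm_num)
  have h2pos : 0 < Real.sqrt 2 := Real.sqrt_pos.mpr (by norm_num)
  have h6pos : 0 < Real.sqrt 6 := Real.sqrt_pos.mpr (by norm_num)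
  -- instantiate the generating function lemma at y = 1/8 and y = -1/8
  have hP := U5_hasSum (y := 1/8) (s := Real.sqrt 2 / 2) (by norm_num [abs_le])
    (by norm_num) (by rw [div_pow, h2]; norm_num) (by positivity)
  have hM := U5_hasSum (y := -(1/8)) (s := Real.sqrt 6 / 2) (by norm_num [abs_le])
    (by norm_num) (by rw [div_pow, h6]; norm_num) (by positivity)
  set Vp : ℝ := (2*(1/8) + 148*(1/8)^2 + 1032*(1/8)^3 + 928*(1/8)^4 + 32*(1/8)^5)
      / (Real.sqrt 2 / 2)^11 with hVp
  set Vm : ℝ := (2*(-(1/8)) + 148*(-(1/8))^2 + 1032*(-(1/8))^3 + 928*(-(1/8))^4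
      + 32*(-(1/8))^5) / (Real.sqrt 6 / 2)^11 with hVm
  have hadd : HasSum (fun q : ℕ => (q:ℝ)^5 * Nat.centralBinom q * (1/8:ℝ)^q
      + (q:ℝ)^5 * Nat.centralBinom q * (-(1/8):ℝ)^q) (Vp + Vm) := hP.add hM
  -- restrict to even indices ≥ 2
  have hinj : Function.Injective (fun k : ℕ => 2*k+2) := fun a b hab => by
    simp only at hab; omega
  have hvanish : ∀ x ∉ Set.range (fun k : ℕ => 2*k+2),
      (x:ℝ)^5 * Nat.centralBinom x * (1/8:ℝ)^x
        + (x:ℝ)^5 * Nat.centralBinom x * (-(1/8):ℝ)^x = 0 := by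
    intro x hx
    rcases Nat.even_or_odd x with ⟨m, hm⟩ | hodd
    · rcases m with _ | k
      · subst hm; norm_num
      · exfalso
        exact hx ⟨k, by simp only; omega⟩
    · have hneg : ((-(1/8)):ℝ)^x = -((1/8:ℝ)^x) := hodd.neg_pow _
      rw [hneg]; ring
  have hcomp : HasSum ((fun q : ℕ => (q:ℝ)^5 * Nat.centralBinom q * (1/8:ℝ)^q
      + (q:ℝ)^5 * Nat.centralBinom q * (-(1/8):ℝ)^q) ∘ (fun k : ℕ => 2*k+2))
      (Vp + Vm) := (hinj.hasSum_iff hvanish).mpr hadd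
  have hcomp' : HasSum (fun k : ℕ => ((2*k+2 : ℕ):ℝ)^5 * Nat.centralBinom (2*k+2) * (1/8:ℝ)^(2*k+2)
      + ((2*k+2 : ℕ):ℝ)^5 * Nat.centralBinom (2*k+2) * (-(1/8):ℝ)^(2*k+2)) (Vp + Vm) := hcomp
  have e2 : (fun k : ℕ => ((2*k+2 : ℕ):ℝ)^5 * Nat.centralBinom (2*k+2) * (1/8:ℝ)^(2*k+2)
      + ((2*k+2 : ℕ):ℝ)^5 * Nat.centralBinom (2*k+2) * (-(1/8):ℝ)^(2*k+2))
      = fun k : ℕ => 6 * (((2*k+2 : ℕ):ℝ)^5 * Nat.centralBinom (2*k+2) / (192 * 64^k)) := by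
    funext k
    have hev : ((-(1/8)):ℝ)^(2*k+2) = ((1/8):ℝ)^(2*k+2) := Even.neg_pow ⟨k+1, by ring⟩ _
    have hp : ((1/8):ℝ)^(2*k+2) = 1/(64 * 64^k) := by
      rw [show 2*k+2 = 2*(k+1) by ring, pow_mul]
      norm_num
      rw [pow_succ]
      ring
      norm_num
    rw [hev, hp]
    ring
  rw [e2] at hcomp'
  have hfin : HasSum (fun k : ℕ => ((2*k+2 : ℕ):ℝ)^5 * Nat.centralBinom (2*k+2) / (192 * 64^k))
      ((Vp + Vm)/6) := by
    have := hcomp'.div_const 6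
    have e3 : (fun k : ℕ => 6 * (((2*k+2 : ℕ):ℝ)^5 * Nat.centralBinom (2*k+2) / (192 * 64^k)) / 6)
        = fun k : ℕ => ((2*k+2 : ℕ):ℝ)^5 * Nat.centralBinom (2*k+2) / (192 * 64^k) := by
      funext k; ring
    exact e3 ▸ this
  have htsum : (∑' n : ℕ, poch (5/4) n * poch (7/4) n * (poch 2 n)^4
      / ((poch 1 n)^4 * poch (3/2) n * (Nat.factorial n)) * (1/4 : ℝ) ^ n) = (Vp + Vm)/6 := by
    rw [tsum_congr lemA]
    exact hfin.tsum_eq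
  rw [htsum]
  -- final algebra with radicals
  have e11p : (Real.sqrt 2 / 2)^11 = Real.sqrt 2 / 64 := by
    rw [div_pow, show (Real.sqrt 2)^11 = ((Real.sqrt 2)^2)^5 * Real.sqrt 2 by ring, h2]
    ring
  have e11m : (Real.sqrt 6 / 2)^11 = 243 * Real.sqrt 6 / 64 := by
    rw [div_pow, show (Real.sqrt 6)^11 = ((Real.sqrt 6)^2)^5 * Real.sqrt 6 by ring, h6]
    ring
  have hVp' : Vp = 6 * (4921 / (96 * Real.sqrt 2)) := by
    rw [hVp, e11p]
    rw [div_eq_iff (by positivity)]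
    field_simp
    try ring
  have hVm' : Vm = 6 * (31 / (2592 * Real.sqrt 6)) := by
    rw [hVm, e11m]
    rw [div_eq_iff (by positivity)]
    field_simp
    try ring
  rw [hVp', hVm']
  ring
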